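/- Any function T on natural numbers satisfying T(3) = O(1) and T(n) ≤ max over α ∈ [1/6, 5/6] of { T(α(n+6)) + T((1−α)(n+6)) + C(n+6), T(α(n+6)) + C(n+6) } for a constant C is bounded by O(n log n). -/

import Mathlib

noncomputable section

/-- Twice the signed area of the triangle `p q r`. -/
def det2 (p q r : ℝ × ℝ) : ℝ :=
  (q.1 - p.1) * (r.2 - p.2) - (q.2 - p.2) * (r.1 - p.1)

/-- Area of the triangle with vertices `p`, `q`, `r`. -/
def triArea (p q r : ℝ × ℝ) : ℝ := |det2 p q r| / 2

/-- The vertices `v 0, v 1, ...` are in strictly convex position, listed in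
counterclockwise cyclic order: every three consecutive vertices make a left turn. -/
def IsConvexCCW {m : ℕ} [NeZero m] (v : Fin m → ℝ × ℝ) : Prop :=
  ∀ i : Fin m, 0 < det2 (v i) (v (i + 1)) (v (i + 1 + 1))

/-- `x` lies on the closed cyclic arc from `a` forward to `b`. -/
def btwFin {m : ℕ} (a x b : Fin m) : Prop := (x - a).val ≤ (b - a).val

/-- `x` lies strictly between `a` and `b` on the cyclic arc from `a` forward to `b`. -/
def sbtwFin {m : ℕ} (a x b : Fin m) : Prop := btwFin a x b ∧ x ≠ a ∧ x ≠ b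

/-- The triangle `△ (v r) (v b) (v c)`, with `r, b, c` in counterclockwise cyclic
order, is 2-stable rooted at `r`: replacing `b` or `c` individually by any other
vertex of the polygon (respecting the cyclic order) does not strictly increase
the area. -/
def TwoStable {m : ℕ} (v : Fin m → ℝ × ℝ) (r b c : Fin m) : Prop :=
  (∀ x : Fin m, btwFin r x c → triArea (v r) (v x) (v c) ≤ triArea (v r) (v b) (v c)) ∧
  (∀ x : Fin m, btwFin b x r → triArea (v r) (v b) (v x) ≤ triArea (v r) (v b) (v c))

/-- The triangle `△ (v p) (v q) (v r)`, with `p, q, r` in counterclockwise cyclic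
order, is 3-stable: replacing any single one of its vertices by any other vertex
of the polygon (respecting the cyclic order) does not strictly increase the area. -/
def ThreeStable {m : ℕ} (v : Fin m → ℝ × ℝ) (p q r : Fin m) : Prop :=
  (∀ x : Fin m, btwFin r x q → triArea (v x) (v q) (v r) ≤ triArea (v p) (v q) (v r)) ∧
  (∀ x : Fin m, btwFin p x r → triArea (v p) (v x) (v r) ≤ triArea (v p) (v q) (v r)) ∧
  (∀ x : Fin m, btwFin q x p → triArea (v p) (v q) (v x) ≤ triArea (v p) (v q) (v r))

/-- Two polygon-aligned triangles, given by index triples in cyclic order,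
interleave: between every two cyclically successive vertices of one there is a
vertex of the other (possibly coinciding with one of them). -/
def InterleaveTri {m : ℕ} (i j k r s t : Fin m) : Prop :=
  (∃ x ∈ ({r, s, t} : Set (Fin m)), btwFin i x j) ∧
  (∃ x ∈ ({r, s, t} : Set (Fin m)), btwFin j x k) ∧
  (∃ x ∈ ({r, s, t} : Set (Fin m)), btwFin k x i) ∧
  (∃ x ∈ ({i, j, k} : Set (Fin m)), btwFin r x s) ∧
  (∃ x ∈ ({i, j, k} : Set (Fin m)), btwFin s x t) ∧
  (∃ x ∈ ({i, j, k} : Set (Fin m)), btwFin t x r)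

set_option maxHeartbeats 1000000 in
/-- The divide-and-conquer recurrence: any function `T` with `T k = O(1)` for
`k ≤ 3` and `T k ≤ max { T(α(k+6)) + T((1-α)(k+6)) + C(k+6), T(α(k+6)) + C(k+6) }`
for some `α ∈ [1/6, 5/6]` (for every `k > 3`) is bounded by `O(k log k)`. -/
theorem recurrence_n_log_n (C : ℝ) (hC : 0 < C) (T : ℕ → ℝ)
    (hbase : ∀ k : ℕ, k ≤ 3 → T k ≤ C)
    (hrec : ∀ k : ℕ, 3 < k → ∃ α : ℝ, 1 / 6 ≤ α ∧ α ≤ 5 / 6 ∧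
      T k ≤ max
        (T ⌊α * ((k : ℝ) + 6)⌋₊ + T ⌊(1 - α) * ((k : ℝ) + 6)⌋₊ + C * ((k : ℝ) + 6))
        (T ⌊α * ((k : ℝ) + 6)⌋₊ + C * ((k : ℝ) + 6))) :
    ∃ D : ℝ, ∀ k : ℕ, 2 ≤ k → T k ≤ D * (k : ℝ) * Real.log (k : ℝ) := by
  -- constant from base range
  set M : ℝ := ((Finset.range 30000).sup' ⟨0, Finset.mem_range.mpr (by norm_num)⟩ T) ⊔ 0 with hM
  set D : ℝ := max (12 * C) M with hDdef
  have hM0 : 0 ≤ M := le_max_right _ _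
  have hD0 : 0 ≤ D := le_trans hM0 (le_max_right _ _)
  have hDC : 12 * C ≤ D := le_max_left _ _
  refine ⟨D, ?_⟩
  intro k
  induction k using Nat.strong_induction_on with
  | _ k ih =>
  intro hk2
  have hk2' : (2:ℝ) ≤ (k:ℝ) := by exact_mod_cast hk2
  have hk0 : (0:ℝ) < (k:ℝ) := by linarith
  have hlogk0 : 0 ≤ Real.log k := Real.log_nonneg (by linarith)
  have hklog1 : (1:ℝ) ≤ (k:ℝ) * Real.log k := by
    have h4 : (1:ℝ) ≤ Real.log 4 := by
      rw [Real.le_log_iff_exp_le (by norm_num)]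
      calc Real.exp 1 ≤ 2.7182818286 := Real.exp_one_lt_d9.le
        _ ≤ 4 := by norm_num
    have h42 : Real.log 4 = 2 * Real.log 2 := by
      rw [show (4:ℝ) = 2^2 by norm_num, Real.log_pow]; push_cast; ring
    have hl2 : Real.log 2 ≤ Real.log k := Real.log_le_log (by norm_num) hk2'
    nlinarith [Real.log_nonneg (show (1:ℝ) ≤ 2 by norm_num)]
  by_cases hkK : k < 30000
  · -- base range
    have h1 : T k ≤ M := le_trans (Finset.le_sup' T (Finset.mem_range.mpr hkK)) (le_max_left _ _)
    have h2 : M ≤ D := le_max_right _ _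
    calc T k ≤ D := le_trans h1 h2
      _ = D * 1 := by ring
      _ ≤ D * ((k:ℝ) * Real.log k) := by
        exact mul_le_mul_of_nonneg_left hklog1 hD0
      _ = D * (k:ℝ) * Real.log k := by ring
  · -- inductive step
    push_neg at hkK
    have hkR : (30000:ℝ) ≤ (k:ℝ) := by exact_mod_cast hkK
    obtain ⟨α, hα1, hα2, hbound⟩ := hrec k (by omega)
    set s : ℝ := (k:ℝ) + 6 with hs
    have hs0 : (0:ℝ) < s := by simp only [hs]; linarith
    have hLs1 : (1:ℝ) ≤ Real.log s := by
      rw [Real.le_log_iff_exp_le hs0]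
      calc Real.exp 1 ≤ 2.7182818286 := Real.exp_one_lt_d9.le
        _ ≤ s := by simp only [hs]; linarith
    have hL0 : (0:ℝ) ≤ Real.log s - 1/6 := by linarith
    have hlog56 : Real.log (5/6 : ℝ) ≤ -(1/6) := by
      have := Real.log_le_sub_one_of_pos (show (0:ℝ) < 5/6 by norm_num)
      linarith
    -- key bound for a subproblem with factor β
    have key : ∀ β : ℝ, 1/6 ≤ β → β ≤ 5/6 →
        T ⌊β * s⌋₊ ≤ D * (β * s) * (Real.log s - 1/6) := by
      intro β h1 h2
      have hβs0 : (0:ℝ) ≤ β * s := by nlinarith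
      set n := ⌊β * s⌋₊ with hn
      have hn_le : (n:ℝ) ≤ β * s := Nat.floor_le hβs0
      have hn2 : 2 ≤ n := Nat.le_floor (by push_cast; nlinarith)
      have hn2' : (2:ℝ) ≤ (n:ℝ) := by exact_mod_cast hn2
      have hnk : n < k := by
        rw [hn, Nat.floor_lt hβs0]
        nlinarith
      have hT := ih n hnk hn2
      have hlogn0 : 0 ≤ Real.log n := Real.log_nonneg (by linarith)
      have hlogn : Real.log n ≤ Real.log s - 1/6 := by
        calc Real.log n ≤ Real.log ((5/6) * s) := Real.log_le_log (by linarith) (by nlinarith)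
          _ = Real.log (5/6) + Real.log s := Real.log_mul (by norm_num) (ne_of_gt hs0)
          _ ≤ Real.log s - 1/6 := by linarith
      calc T n ≤ D * n * Real.log n := hT
        _ ≤ D * n * (Real.log s - 1/6) := by
            exact mul_le_mul_of_nonneg_left hlogn (by positivity)
        _ ≤ D * (β * s) * (Real.log s - 1/6) := by
            apply mul_le_mul_of_nonneg_right _ hL0
            exact mul_le_mul_of_nonneg_left hn_le hD0
    have key1 := key α hα1 hα2
    have key2 := key (1 - α) (by linarith) (by linarith)
    -- the combined bound
    have hsum : T k ≤ D * s * (Real.log s - 1/6) + C * s := by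
      refine le_trans hbound (max_le ?_ ?_)
      · have : D * (α * s) * (Real.log s - 1/6) + D * ((1-α) * s) * (Real.log s - 1/6)
            = D * s * (Real.log s - 1/6) := by ring
        linarith
      · have h1 : D * (α * s) * (Real.log s - 1/6) ≤ D * s * (Real.log s - 1/6) := by
          apply mul_le_mul_of_nonneg_right _ hL0
          apply mul_le_mul_of_nonneg_left _ hD0
          nlinarith [hs0.le]
        linarith
    -- final arithmetic
    have hls : Real.log s ≤ Real.log k + 6 / (k:ℝ) := by
      have hpos : (0:ℝ) < s / (k:ℝ) := by positivity
      have h := Real.log_le_sub_one_of_pos hpos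
      rw [Real.log_div (ne_of_gt hs0) (ne_of_gt hk0)] at h
      have : s / (k:ℝ) - 1 = 6 / (k:ℝ) := by
        field_simp [hs]
        linarith
      linarith [this ▸ h]
    have hlk : 72 * Real.log k ≤ (k:ℝ) - 138 := by
      have hsqp : (0:ℝ) < Real.sqrt k := Real.sqrt_pos.mpr hk0
      have h1 : Real.log k = 2 * Real.log (Real.sqrt k) := by
        rw [Real.log_sqrt hk0.le]; ring
      have h2 : Real.log (Real.sqrt k) ≤ Real.sqrt k := by
        have := Real.log_le_sub_one_of_pos hsqp; linarith
      have h3 : (173:ℝ) ≤ Real.sqrt k := by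
        rw [Real.le_sqrt (by norm_num) hk0.le]; nlinarith
      have h4 : Real.sqrt k * Real.sqrt k = (k:ℝ) := Real.mul_self_sqrt hk0.le
      have h5 : Real.sqrt k ≤ (k:ℝ) / 173 := by
        rw [le_div_iff₀ (by norm_num : (0:ℝ) < 173)]
        nlinarith
      nlinarith
    have hfinal : D * s * (Real.log s - 1/6) + C * s ≤ D * (k:ℝ) * Real.log k := by
      have e1 : D * s * Real.log s ≤ D * s * (Real.log k + 6 / (k:ℝ)) :=
        mul_le_mul_of_nonneg_left hls (by positivity)
      have e2 : s * (6 / (k:ℝ)) ≤ 12 := by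
        rw [mul_div_assoc']
        rw [div_le_iff₀ hk0]
        simp only [hs]; linarith
      have e3 : D * (s * (6 / (k:ℝ))) ≤ D * 12 := mul_le_mul_of_nonneg_left e2 hD0
      have e4 : C * s ≤ D * (s / 12) := by
        have : C * s ≤ (D / 12) * s := mul_le_mul_of_nonneg_right (by linarith) hs0.le
        linarith [this]
      have e5 : D * (6 * Real.log k + 12) ≤ D * (s / 12) := by
        apply mul_le_mul_of_nonneg_left _ hD0
        simp only [hs]; linarith
      have e6 : D * s * (Real.log k + 6 / (k:ℝ))
          = D * (k:ℝ) * Real.log k + D * (6 * Real.log k) + D * (s * (6 / (k:ℝ))) := by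
        simp only [hs]; ring
      have e7 : D * s * (Real.log s - 1/6) = D * s * Real.log s - D * (s / 12) - D * (s / 12) := by
        ring
      have e8 : D * (6 * Real.log k + 12) = D * (6 * Real.log k) + D * 12 := by ring
      linarith
    linarith
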